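/- Let n > 1, let U ⊂ ℝⁿ be a nonempty open O(n)-invariant set, I = {|x|² : x ∈ U}, and let θ : I → (0,∞) be of class C². Set ρ(x+iy) = |y|² − θ(|x|²) and Σ = {x+iy : x ∈ U, |y|² = θ(|x|²)}. Then L_ρ(p;v) < 0 for every p ∈ Σ and every nonzero v ∈ T_p^ℂΣ (i.e. the domain D₊ = {x+iy : x ∈ U, |y|² > θ(|x|²)} is strongly pseudoconvex along Σ) if and only if for every s ∈ I one has θ'(s) > 1 and 2 s θ(s) θ''(s) > (1 − θ'(s)) (s θ'(s)² + θ(s)). -/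

import Mathlib

open Complex Set

/-- The Levi form of a `C²` function `ρ` at `p` in direction `v`:
`4 L_ρ(p;v) = H_p(v,v) + H_p(iv,iv)` where `H_p` is the second real Fréchet derivative. -/
noncomputable def leviForm {E : Type*} [NormedAddCommGroup E] [NormedSpace ℂ E]
    (ρ : E → ℝ) (p v : E) : ℝ :=
  (iteratedFDeriv ℝ 2 ρ p ![v, v]
    + iteratedFDeriv ℝ 2 ρ p ![Complex.I • v, Complex.I • v]) / 4

/-- The complex tangent space `T_p^ℂΣ = {v : dρ_p(v) = 0 and dρ_p(iv) = 0}`. -/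
def complexTangent {E : Type*} [NormedAddCommGroup E] [NormedSpace ℂ E]
    (ρ : E → ℝ) (p : E) : Set E :=
  {v | fderiv ℝ ρ p v = 0 ∧ fderiv ℝ ρ p (Complex.I • v) = 0}

/-- `ρ(x+iy) = |y|² - θ(|x|²)`. -/
noncomputable def rho (n : ℕ) (θ : ℝ → ℝ) : (Fin n → ℂ) → ℝ :=
  fun z => (∑ j, (z j).im ^ 2) - θ (∑ j, (z j).re ^ 2)

/-- The hypersurface `Σ = {x+iy : x ∈ U, |y|² = θ(|x|²)}`. -/
def SigmaSet (n : ℕ) (U : Set (Fin n → ℝ)) (θ : ℝ → ℝ) : Set (Fin n → ℂ) :=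
  {z | (fun j => (z j).re) ∈ U ∧ (∑ j, (z j).im ^ 2) = θ (∑ j, (z j).re ^ 2)}

namespace StrPsc
variable {n : ℕ}

noncomputable def reL (j : Fin n) : (Fin n → ℂ) →L[ℝ] ℝ :=
  Complex.reCLM.comp (ContinuousLinearMap.proj j)
noncomputable def imL (j : Fin n) : (Fin n → ℂ) →L[ℝ] ℝ :=
  Complex.imCLM.comp (ContinuousLinearMap.proj j)
@[simp] lemma reL_apply (j : Fin n) (z : Fin n → ℂ) : reL j z = (z j).re := rfl
@[simp] lemma imL_apply (j : Fin n) (z : Fin n → ℂ) : imL j z = (z j).im := rfl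
noncomputable def Bre (n : ℕ) : (Fin n → ℂ) →L[ℝ] ((Fin n → ℂ) →L[ℝ] ℝ) :=
  ∑ j, (reL j).smulRight (reL j)
noncomputable def Bim (n : ℕ) : (Fin n → ℂ) →L[ℝ] ((Fin n → ℂ) →L[ℝ] ℝ) :=
  ∑ j, (imL j).smulRight (imL j)
@[simp] lemma Bre_apply (z w : Fin n → ℂ) : Bre n z w = ∑ j, (z j).re * (w j).re := by
  simp [Bre, ContinuousLinearMap.sum_apply, ContinuousLinearMap.smulRight_apply,
    ContinuousLinearMap.smul_apply, smul_eq_mul]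
@[simp] lemma Bim_apply (z w : Fin n → ℂ) : Bim n z w = ∑ j, (z j).im * (w j).im := by
  simp [Bim, ContinuousLinearMap.sum_apply, ContinuousLinearMap.smulRight_apply,
    ContinuousLinearMap.smul_apply, smul_eq_mul]

lemma hasFDerivAt_sumRe (p : Fin n → ℂ) :
    HasFDerivAt (fun z : Fin n → ℂ => ∑ j, (z j).re ^ 2) ((2:ℝ) • Bre n p) p := by
  have h : ∀ j ∈ Finset.univ, HasFDerivAt (fun z : Fin n → ℂ => (z j).re ^ 2)
      ((2 * (p j).re) • reL j) p := by
    intro j _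
    have h0 : HasFDerivAt (fun z : Fin n → ℂ => (z j).re) (reL j) p := (reL j).hasFDerivAt
    have h1 := h0.mul h0
    have : ((p j).re • reL j + (p j).re • reL j : (Fin n → ℂ) →L[ℝ] ℝ)
        = (2 * (p j).re) • reL j := by
      ext w; simp [ContinuousLinearMap.add_apply, ContinuousLinearMap.smul_apply]; ring
    rw [← this]
    simpa [pow_two, Pi.mul_def] using h1
  have h2 := HasFDerivAt.fun_sum h
  refine h2.congr_fderiv ?_
  ext w
  simp [ContinuousLinearMap.sum_apply, ContinuousLinearMap.smul_apply, Finset.mul_sum,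
    smul_eq_mul]
  exact Finset.sum_congr rfl fun j _ => by ring

lemma hasFDerivAt_sumIm (p : Fin n → ℂ) :
    HasFDerivAt (fun z : Fin n → ℂ => ∑ j, (z j).im ^ 2) ((2:ℝ) • Bim n p) p := by
  have h : ∀ j ∈ Finset.univ, HasFDerivAt (fun z : Fin n → ℂ => (z j).im ^ 2)
      ((2 * (p j).im) • imL j) p := by
    intro j _
    have h0 : HasFDerivAt (fun z : Fin n → ℂ => (z j).im) (imL j) p := (imL j).hasFDerivAt
    have h1 := h0.mul h0
    have : ((p j).im • imL j + (p j).im • imL j : (Fin n → ℂ) →L[ℝ] ℝ)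
        = (2 * (p j).im) • imL j := by
      ext w; simp [ContinuousLinearMap.add_apply, ContinuousLinearMap.smul_apply]; ring
    rw [← this]
    simpa [pow_two, Pi.mul_def] using h1
  have h2 := HasFDerivAt.fun_sum h
  refine h2.congr_fderiv ?_
  ext w
  simp [ContinuousLinearMap.sum_apply, ContinuousLinearMap.smul_apply, Finset.mul_sum,
    smul_eq_mul]
  exact Finset.sum_congr rfl fun j _ => by ring

/-- The explicit first derivative of `rho`. -/
noncomputable def Phi (n : ℕ) (θ : ℝ → ℝ) (z : Fin n → ℂ) : (Fin n → ℂ) →L[ℝ] ℝ :=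
  (2:ℝ) • Bim n z - (2 * deriv θ (∑ j, (z j).re ^ 2)) • Bre n z

lemma Phi_apply (θ : ℝ → ℝ) (z w : Fin n → ℂ) :
    Phi n θ z w = 2 * (∑ j, (z j).im * (w j).im)
      - 2 * deriv θ (∑ j, (z j).re ^ 2) * (∑ j, (z j).re * (w j).re) := by
  simp [Phi, ContinuousLinearMap.sub_apply, ContinuousLinearMap.smul_apply, smul_eq_mul]

variable {θ : ℝ → ℝ} {V : Set ℝ}

lemma hasFDerivAt_rho (hV : IsOpen V) (hθ : ContDiffOn ℝ 2 θ V)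
    {p : Fin n → ℂ} (hmem : (∑ j, (p j).re ^ 2) ∈ V) :
    HasFDerivAt (rho n θ) (Phi n θ p) p := by
  have hB := hasFDerivAt_sumRe p
  have hA := hasFDerivAt_sumIm p
  have hd : HasDerivAt θ (deriv θ (∑ j, (p j).re ^ 2)) (∑ j, (p j).re ^ 2) :=
    ((hθ.differentiableOn two_ne_zero).differentiableAt (hV.mem_nhds hmem)).hasDerivAt
  have h := hA.sub (hd.comp_hasFDerivAt p hB)
  have heq : (Phi n θ p) = (2:ℝ) • Bim n p - deriv θ (∑ j, (p j).re ^ 2) • ((2:ℝ) • Bre n p) := by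
    ext w
    simp [Phi, ContinuousLinearMap.sub_apply, ContinuousLinearMap.smul_apply, smul_eq_mul]
    try ring
  rw [heq]
  exact h

lemma fderiv_rho (hV : IsOpen V) (hθ : ContDiffOn ℝ 2 θ V)
    {p : Fin n → ℂ} (hmem : (∑ j, (p j).re ^ 2) ∈ V) :
    fderiv ℝ (rho n θ) p = Phi n θ p :=
  (hasFDerivAt_rho hV hθ hmem).fderiv

lemma second_deriv (hV : IsOpen V) (hθ : ContDiffOn ℝ 2 θ V)
    {p : Fin n → ℂ} (hmem : (∑ j, (p j).re ^ 2) ∈ V) (v w : Fin n → ℂ) :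
    iteratedFDeriv ℝ 2 (rho n θ) p ![v, w] =
      2 * (∑ j, (v j).im * (w j).im)
      - 2 * deriv θ (∑ j, (p j).re ^ 2) * (∑ j, (v j).re * (w j).re)
      - 4 * deriv (deriv θ) (∑ j, (p j).re ^ 2)
          * ((∑ j, (p j).re * (v j).re) * (∑ j, (p j).re * (w j).re)) := by
  have hBcont : Continuous (fun z : Fin n → ℂ => ∑ j, (z j).re ^ 2) := by
    refine continuous_finset_sum _ fun j _ => ?_
    exact (Complex.continuous_re.comp (continuous_apply j)).pow 2
  have hWopen : IsOpen {z : Fin n → ℂ | (∑ j, (z j).re ^ 2) ∈ V} := hV.preimage hBcont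
  have hev : fderiv ℝ (rho n θ) =ᶠ[nhds p] Phi n θ := by
    filter_upwards [hWopen.mem_nhds hmem] with z hz using fderiv_rho hV hθ hz
  set s := ∑ j, (p j).re ^ 2 with hs
  have hdd : HasDerivAt (deriv θ) (deriv (deriv θ) s) s := by
    have h1 : ContDiffOn ℝ 1 (deriv θ) V := hθ.deriv_of_isOpen hV (by norm_num)
    exact ((h1.differentiableOn one_ne_zero).differentiableAt (hV.mem_nhds hmem)).hasDerivAt
  have hB := hasFDerivAt_sumRe p
  have hc : HasFDerivAt (fun z : Fin n → ℂ => 2 * deriv θ (∑ j, (z j).re ^ 2))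
      ((2:ℝ) • (deriv (deriv θ) s • ((2:ℝ) • Bre n p))) p :=
    by have h := hdd.comp_hasFDerivAt p hB; exact h.const_mul 2
  have hsm := hc.smul ((Bre n).hasFDerivAt (x := p))
  have h2 := (((Bim n).hasFDerivAt (x := p)).const_smul (2:ℝ)).sub hsm
  have hPhi : HasFDerivAt (Phi n θ)
      ((2:ℝ) • Bim n -
        ((2 * deriv θ s) • Bre n
          + ((2:ℝ) • (deriv (deriv θ) s • ((2:ℝ) • Bre n p))).smulRight (Bre n p))) p := h2
  rw [iteratedFDeriv_two_apply, hev.fderiv_eq, hPhi.fderiv]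
  simp only [Matrix.cons_val_zero, Matrix.cons_val_one, Matrix.head_cons,
    ContinuousLinearMap.sub_apply, ContinuousLinearMap.add_apply,
    ContinuousLinearMap.smul_apply, ContinuousLinearMap.smulRight_apply,
    Bre_apply, Bim_apply, smul_eq_mul]
  ring

@[simp] lemma re_I_smul (v : Fin n → ℂ) (j : Fin n) :
    ((Complex.I • v) j).re = -((v j).im) := by
  simp [Pi.smul_apply, smul_eq_mul, Complex.I_mul_re]

@[simp] lemma im_I_smul (v : Fin n → ℂ) (j : Fin n) :
    ((Complex.I • v) j).im = (v j).re := by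
  simp [Pi.smul_apply, smul_eq_mul, Complex.I_mul_im]

lemma levi_formula (hV : IsOpen V) (hθ : ContDiffOn ℝ 2 θ V)
    {p : Fin n → ℂ} (hmem : (∑ j, (p j).re ^ 2) ∈ V) (v : Fin n → ℂ) :
    leviForm (rho n θ) p v =
      (2 * (∑ j, (v j).im * (v j).im)
        - 2 * deriv θ (∑ j, (p j).re ^ 2) * (∑ j, (v j).re * (v j).re)
        - 4 * deriv (deriv θ) (∑ j, (p j).re ^ 2)
            * ((∑ j, (p j).re * (v j).re) * (∑ j, (p j).re * (v j).re))
       + (2 * (∑ j, (v j).re * (v j).re)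
        - 2 * deriv θ (∑ j, (p j).re ^ 2) * (∑ j, (v j).im * (v j).im)
        - 4 * deriv (deriv θ) (∑ j, (p j).re ^ 2)
            * ((∑ j, (p j).re * (v j).im) * (∑ j, (p j).re * (v j).im)))) / 4 := by
  unfold leviForm
  rw [second_deriv hV hθ hmem v v, second_deriv hV hθ hmem (Complex.I • v) (Complex.I • v)]
  simp only [re_I_smul, im_I_smul]
  rw [show (∑ j, -(v j).im * -(v j).im) = ∑ j, (v j).im * (v j).im from
    Finset.sum_congr rfl fun j _ => by ring]
  rw [show (∑ j, (p j).re * -(v j).im) = -(∑ j, (p j).re * (v j).im) by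
    rw [← Finset.sum_neg_distrib]; exact Finset.sum_congr rfl fun j _ => by ring]
  ring

lemma tangent_iff (hV : IsOpen V) (hθ : ContDiffOn ℝ 2 θ V)
    {p : Fin n → ℂ} (hmem : (∑ j, (p j).re ^ 2) ∈ V) (v : Fin n → ℂ) :
    v ∈ complexTangent (rho n θ) p ↔
      (2 * (∑ j, (p j).im * (v j).im)
          - 2 * deriv θ (∑ j, (p j).re ^ 2) * (∑ j, (p j).re * (v j).re) = 0
        ∧ 2 * (∑ j, (p j).im * (v j).re)
          + 2 * deriv θ (∑ j, (p j).re ^ 2) * (∑ j, (p j).re * (v j).im) = 0) := by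
  unfold complexTangent
  rw [mem_setOf_eq, fderiv_rho hV hθ hmem, Phi_apply, Phi_apply]
  simp only [re_I_smul, im_I_smul]
  rw [show (∑ j, (p j).re * -(v j).im) = -(∑ j, (p j).re * (v j).im) by
    rw [← Finset.sum_neg_distrib]; exact Finset.sum_congr rfl fun j _ => by ring]
  constructor
  · rintro ⟨h1, h2⟩; exact ⟨h1, by linarith⟩
  · rintro ⟨h1, h2⟩; exact ⟨h1, by linarith⟩

lemma expand2 {ι : Type*} [Fintype ι] (f u v : ι → ℝ) (c d : ℝ) :
    ∑ i, f i * (c * u i + d * v i) = c * (∑ i, u i * f i) + d * (∑ i, v i * f i) := by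
  rw [Finset.mul_sum, Finset.mul_sum, ← Finset.sum_add_distrib]
  exact Finset.sum_congr rfl fun i _ => by ring

lemma cs2 {ι : Type*} [Fintype ι] (v w w' : ι → ℝ)
    (hww' : ∑ i, w i * w' i = 0)
    (hnorm : ∑ i, w i * w i = ∑ i, w' i * w' i) :
    (∑ i, v i * w i) ^ 2 + (∑ i, v i * w' i) ^ 2
      ≤ (∑ i, v i * v i) * (∑ i, w i * w i) := by
  set c := ∑ i, v i * w i with hc
  set e := ∑ i, v i * w' i with he
  have hvz : ∑ i, v i * (c * w i + e * w' i) = c * c + e * e := by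
    rw [expand2]
    rw [show (∑ i, w i * v i) = c from Finset.sum_congr rfl fun i _ => mul_comm _ _,
      show (∑ i, w' i * v i) = e from Finset.sum_congr rfl fun i _ => mul_comm _ _]
  have hzz : ∑ i, (c * w i + e * w' i) * (c * w i + e * w' i)
      = (c ^ 2 + e ^ 2) * (∑ i, w i * w i) := by
    rw [expand2]
    rw [show (∑ i, w i * (c * w i + e * w' i))
        = c * (∑ i, w i * w i) + e * (∑ i, w i * w' i) by
      rw [expand2]
      rw [show (∑ i, w' i * w i) = ∑ i, w i * w' i from
        Finset.sum_congr rfl fun i _ => mul_comm _ _]]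
    rw [show (∑ i, w' i * (c * w i + e * w' i))
        = c * (∑ i, w i * w' i) + e * (∑ i, w' i * w' i) by rw [expand2]]
    rw [hww', ← hnorm]
    ring
  have hCS := Finset.sum_mul_sq_le_sq_mul_sq Finset.univ v (fun i => c * w i + e * w' i)
  rw [hvz] at hCS
  have hv2 : (∑ i, v i ^ 2) = ∑ i, v i * v i := Finset.sum_congr rfl fun i _ => sq _
  have hz2 : (∑ i, (c * w i + e * w' i) ^ 2)
      = (c ^ 2 + e ^ 2) * (∑ i, w i * w i) := by
    rw [← hzz]; exact Finset.sum_congr rfl fun i _ => sq _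
  rw [hv2, hz2] at hCS
  have h1 : 0 ≤ ∑ i, v i * v i := Finset.sum_nonneg fun i _ => mul_self_nonneg _
  have h2 : 0 ≤ ∑ i, w i * w i := Finset.sum_nonneg fun i _ => mul_self_nonneg _
  clear_value c e
  rcases eq_or_lt_of_le (by positivity : (0:ℝ) ≤ c ^ 2 + e ^ 2) with h0 | h0
  · nlinarith [mul_nonneg h1 h2]
  · nlinarith [hCS]

lemma tangent_bound {ι : Type*} [Fintype ι] (x y a b : ι → ℝ) (t' : ℝ)
    (h1 : t' * (∑ i, x i * a i) = ∑ i, y i * b i)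
    (h2 : t' * (∑ i, x i * b i) = -(∑ i, y i * a i)) :
    (t' ^ 2 * (∑ i, x i * x i) + ∑ i, y i * y i)
        * ((∑ i, x i * a i) ^ 2 + (∑ i, x i * b i) ^ 2)
      ≤ ((∑ i, x i * x i) * (∑ i, y i * y i))
        * ((∑ i, a i * a i) + (∑ i, b i * b i)) := by
  set s := ∑ i, x i * x i with hsdef
  set t := ∑ i, x i * y i with htdef
  set tv := ∑ i, y i * y i with htvdef
  set xa := ∑ i, x i * a i with hxadef
  set xb := ∑ i, x i * b i with hxbdef
  set ya := ∑ i, y i * a i with hyadef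
  set yb := ∑ i, y i * b i with hybdef
  set na := ∑ i, a i * a i with hnadef
  set nb := ∑ i, b i * b i with hnbdef
  have cxy : ∑ i, y i * x i = t := by
    rw [htdef]; exact Finset.sum_congr rfl fun i _ => mul_comm _ _
  set m := t' ^ 2 * s + tv with hmdef
  have hVw : ∑ i : ι ⊕ ι,
      (Sum.elim a b) i * (Sum.elim (fun i => tv * x i + (-t) * y i)
        (fun i => (t' * s) * y i + (-(t' * t)) * x i)) i = m * xa := by
    rw [Fintype.sum_sum_type]
    simp only [Sum.elim_inl, Sum.elim_inr]
    rw [expand2, expand2, ← hxadef, ← hyadef, ← hybdef, ← hxbdef, hmdef]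
    linear_combination (-(t' * s)) * h1 + (-t) * h2
  have hVw' : ∑ i : ι ⊕ ι,
      (Sum.elim a b) i * (Sum.elim (fun i => (-(t' * s)) * y i + (t' * t) * x i)
        (fun i => tv * x i + (-t) * y i)) i = m * xb := by
    rw [Fintype.sum_sum_type]
    simp only [Sum.elim_inl, Sum.elim_inr]
    rw [expand2, expand2, ← hxadef, ← hyadef, ← hybdef, ← hxbdef, hmdef]
    linear_combination t * h1 + (-(t' * s)) * h2
  have hww' : ∑ i : ι ⊕ ι,
      (Sum.elim (fun i => tv * x i + (-t) * y i)
        (fun i => (t' * s) * y i + (-(t' * t)) * x i)) i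
      * (Sum.elim (fun i => (-(t' * s)) * y i + (t' * t) * x i)
        (fun i => tv * x i + (-t) * y i)) i = 0 := by
    rw [Fintype.sum_sum_type]
    simp only [Sum.elim_inl, Sum.elim_inr]
    rw [expand2, expand2, expand2, expand2, expand2, expand2, cxy, ← hsdef, ← htdef, ← htvdef]
    ring
  have hwnorm : ∑ i : ι ⊕ ι,
      (Sum.elim (fun i => tv * x i + (-t) * y i)
        (fun i => (t' * s) * y i + (-(t' * t)) * x i)) i
      * (Sum.elim (fun i => tv * x i + (-t) * y i)
        (fun i => (t' * s) * y i + (-(t' * t)) * x i)) i = (s * tv - t ^ 2) * m := by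
    rw [Fintype.sum_sum_type]
    simp only [Sum.elim_inl, Sum.elim_inr]
    rw [expand2, expand2, expand2, expand2, expand2, expand2, cxy, ← hsdef, ← htdef, ← htvdef,
      hmdef]
    try ring
  have hw'norm : ∑ i : ι ⊕ ι,
      (Sum.elim (fun i => (-(t' * s)) * y i + (t' * t) * x i)
        (fun i => tv * x i + (-t) * y i)) i
      * (Sum.elim (fun i => (-(t' * s)) * y i + (t' * t) * x i)
        (fun i => tv * x i + (-t) * y i)) i = (s * tv - t ^ 2) * m := by
    rw [Fintype.sum_sum_type]
    simp only [Sum.elim_inl, Sum.elim_inr]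
    rw [expand2, expand2, expand2, expand2, expand2, expand2, cxy, ← hsdef, ← htdef, ← htvdef,
      hmdef]
    try ring
  have hVV : ∑ i : ι ⊕ ι, (Sum.elim a b) i * (Sum.elim a b) i = na + nb := by
    rw [Fintype.sum_sum_type]
    simp only [Sum.elim_inl, Sum.elim_inr]
    rfl
  have key := cs2 (Sum.elim a b)
    (Sum.elim (fun i => tv * x i + (-t) * y i)
      (fun i => (t' * s) * y i + (-(t' * t)) * x i))
    (Sum.elim (fun i => (-(t' * s)) * y i + (t' * t) * x i)
      (fun i => tv * x i + (-t) * y i))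
    hww' (hwnorm.trans hw'norm.symm)
  rw [hVw, hVw', hVV, hwnorm] at key
  have hs0 : 0 ≤ s := Finset.sum_nonneg fun i _ => mul_self_nonneg _
  have htv0 : 0 ≤ tv := Finset.sum_nonneg fun i _ => mul_self_nonneg _
  have hna0 : 0 ≤ na := Finset.sum_nonneg fun i _ => mul_self_nonneg _
  have hnb0 : 0 ≤ nb := Finset.sum_nonneg fun i _ => mul_self_nonneg _
  have hm0 : 0 ≤ m := by
    rw [hmdef]; exact add_nonneg (mul_nonneg (sq_nonneg t') hs0) htv0
  clear_value s t tv xa xb ya yb na nb m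
  clear hsdef htdef htvdef hxadef hxbdef hyadef hybdef hnadef hnbdef hmdef cxy
    hVw hVw' hww' hwnorm hw'norm hVV h1 h2
  rcases eq_or_lt_of_le hm0 with hm | hm
  · rw [← hm, zero_mul]
    have := mul_nonneg (mul_nonneg hs0 htv0) (add_nonneg hna0 hnb0)
    linarith
  · have h7 : m * (m * (xa ^ 2 + xb ^ 2)) ≤ m * ((s * tv) * (na + nb)) := by
      nlinarith [key, mul_nonneg (mul_nonneg (add_nonneg hna0 hnb0) (sq_nonneg t)) hm0]
    exact le_of_mul_le_mul_left h7 hm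

lemma levi_neg {ι : Type*} [Fintype ι] (x y a b : ι → ℝ) (t' t'' : ℝ)
    (htv : 0 < ∑ i, y i * y i)
    (h1 : t' * (∑ i, x i * a i) = ∑ i, y i * b i)
    (h2 : t' * (∑ i, x i * b i) = -(∑ i, y i * a i))
    (hN : 0 < (∑ i, a i * a i) + (∑ i, b i * b i))
    (ht' : 1 < t')
    (hineq : (1 - t') * ((∑ i, x i * x i) * t' ^ 2 + (∑ i, y i * y i))
        < 2 * (∑ i, x i * x i) * (∑ i, y i * y i) * t'') :
    2 * (∑ i, b i * b i) - 2 * t' * (∑ i, a i * a i)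
      - 4 * t'' * ((∑ i, x i * a i) * (∑ i, x i * a i))
      + (2 * (∑ i, a i * a i) - 2 * t' * (∑ i, b i * b i)
      - 4 * t'' * ((∑ i, x i * b i) * (∑ i, x i * b i))) < 0 := by
  have hbd := tangent_bound x y a b t' h1 h2
  set s := ∑ i, x i * x i with hsdef
  set tv := ∑ i, y i * y i with htvdef
  set xa := ∑ i, x i * a i with hxadef
  set xb := ∑ i, x i * b i with hxbdef
  set na := ∑ i, a i * a i with hnadef
  set nb := ∑ i, b i * b i with hnbdef
  have hs0 : 0 ≤ s := Finset.sum_nonneg fun i _ => mul_self_nonneg _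
  clear_value s tv xa xb na nb
  rcases le_or_gt 0 t'' with h | h
  · nlinarith [mul_nonneg h (mul_self_nonneg xa), mul_nonneg h (mul_self_nonneg xb),
      mul_pos (by linarith : (0:ℝ) < t' - 1) hN]
  · by_contra h'
    push_neg at h'
    have hm : 0 < t' ^ 2 * s + tv := by nlinarith [mul_nonneg (sq_nonneg t') hs0]
    nlinarith [mul_le_mul_of_nonneg_left hbd (by linarith : (0:ℝ) ≤ -4 * t''),
      mul_lt_mul_of_pos_left hineq (by linarith : (0:ℝ) < 2 * (na + nb)),
      mul_nonneg (le_of_lt hm) (by linarith :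
        (0:ℝ) ≤ 2 * nb - 2 * t' * na - 4 * t'' * (xa * xa)
          + (2 * na - 2 * t' * nb - 4 * t'' * (xb * xb)))]

lemma sum_ind (g : Fin n → ℝ) (j0 : Fin n) :
    (∑ i, g i * (if i = j0 then (1:ℝ) else 0)) = g j0 := by
  simp [mul_ite, Finset.sum_ite_eq']

end StrPsc

set_option maxHeartbeats 1000000 in
open StrPsc in
theorem stmt_1 {n : ℕ} (hn : 1 < n)
    (U : Set (Fin n → ℝ)) (hUne : U.Nonempty) (hUopen : IsOpen U)
    (hUinv : ∀ x x' : Fin n → ℝ, x ∈ U → (∑ j, x' j ^ 2) = (∑ j, x j ^ 2) → x' ∈ U)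
    (θ : ℝ → ℝ) (V : Set ℝ) (hV : IsOpen V)
    (hIV : {s : ℝ | ∃ x ∈ U, s = ∑ j, x j ^ 2} ⊆ V)
    (hθ : ContDiffOn ℝ 2 θ V)
    (hθpos : ∀ s ∈ {s : ℝ | ∃ x ∈ U, s = ∑ j, x j ^ 2}, 0 < θ s) :
    (∀ p ∈ SigmaSet n U θ, ∀ v ∈ complexTangent (rho n θ) p, v ≠ 0 →
        leviForm (rho n θ) p v < 0)
    ↔ (∀ s ∈ {s : ℝ | ∃ x ∈ U, s = ∑ j, x j ^ 2},
        1 < deriv θ s ∧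
        (1 - deriv θ s) * (s * (deriv θ s) ^ 2 + θ s) <
          2 * s * θ s * deriv (deriv θ) s) := by
  constructor
  · -- Levi negativity ⇒ differential inequalities
    intro hL s hsmem
    obtain ⟨x, hxU, hsx⟩ := hsmem
    have hsI : s ∈ {s : ℝ | ∃ x ∈ U, s = ∑ j, x j ^ 2} := ⟨x, hxU, hsx⟩
    have hsV : s ∈ V := hIV hsI
    have hθs : 0 < θ s := hθpos s hsI
    have hs0 : 0 ≤ s := by
      rw [hsx]; exact Finset.sum_nonneg fun i _ => sq_nonneg _
    haveI : NeZero n := ⟨by omega⟩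
    rcases eq_or_lt_of_le hs0 with hs0' | hspos
    · -- case s = 0 : then x = 0
      have hx0 : ∀ j, x j = 0 := by
        intro j
        have hzero : (∑ j, x j ^ 2) = 0 := by rw [← hsx, ← hs0']
        have h := (Finset.sum_eq_zero_iff_of_nonneg
          (fun i (_ : i ∈ Finset.univ) => sq_nonneg (x i))).mp hzero j (Finset.mem_univ j)
        exact pow_eq_zero_iff two_ne_zero |>.mp h
      set i0 : Fin n := ⟨0, by omega⟩ with hi0
      set i1 : Fin n := ⟨1, by omega⟩ with hi1
      have h01 : i1 ≠ i0 := by simp [hi0, hi1, Fin.ext_iff]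
      set c0 := Real.sqrt (θ s) with hc0def
      have hc0sq : c0 * c0 = θ s := Real.mul_self_sqrt hθs.le
      set p0 : Fin n → ℂ := fun j => ⟨x j, if j = i0 then c0 else 0⟩ with hp0
      have hre0 : ∀ j, (p0 j).re = x j := fun j => rfl
      have him0 : ∀ j, (p0 j).im = (if j = i0 then c0 else 0) := fun j => rfl
      have hsum_re : (∑ j, (p0 j).re ^ 2) = s := by
        rw [hsx]
      have hmem0 : (∑ j, (p0 j).re ^ 2) ∈ V := by rw [hsum_re]; exact hsV
      have hp0S : p0 ∈ SigmaSet n U θ := by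
        refine ⟨?_, ?_⟩
        · have hfx : (fun j => (p0 j).re) = x := funext fun j => rfl
          rw [hfx]; exact hxU
        · rw [hsum_re]
          have hitepow : ∀ j : Fin n, ((if j = i0 then c0 else 0:ℝ)) ^ 2
              = (if j = i0 then θ s else 0) := by
            intro j; split
            · rw [pow_two, hc0sq]
            · norm_num
          calc (∑ j, (p0 j).im ^ 2) = ∑ j, (if j = i0 then θ s else 0) := by
                exact Finset.sum_congr rfl fun j _ => by rw [him0 j, hitepow j]
            _ = θ s := by simp
      set v0 : Fin n → ℂ := fun j => (if j = i1 then (1:ℂ) else 0) with hv0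
      have hv0re : ∀ j, (v0 j).re = (if j = i1 then (1:ℝ) else 0) := by
        intro j; by_cases hj : j = i1 <;> simp [hv0, hj]
      have hv0im : ∀ j, (v0 j).im = 0 := by
        intro j; by_cases hj : j = i1 <;> simp [hv0, hj]
      have S1 : (∑ j, (p0 j).im * (v0 j).im) = 0 := by simp [hv0im]
      have S2 : (∑ j, (p0 j).re * (v0 j).re) = 0 := by
        calc (∑ j, (p0 j).re * (v0 j).re)
            = ∑ j, x j * (if j = i1 then (1:ℝ) else 0) :=
              Finset.sum_congr rfl fun j _ => by rw [hre0 j, hv0re j]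
          _ = x i1 := sum_ind x i1
          _ = 0 := hx0 i1
      have S3 : (∑ j, (p0 j).im * (v0 j).re) = 0 := by
        calc (∑ j, (p0 j).im * (v0 j).re)
            = ∑ j, (fun i => if i = i0 then c0 else 0) j * (if j = i1 then (1:ℝ) else 0) :=
              Finset.sum_congr rfl fun j _ => by rw [him0 j, hv0re j]
          _ = (fun i => if i = i0 then c0 else 0) i1 := sum_ind _ i1
          _ = 0 := by simp [h01]
      have S4 : (∑ j, (p0 j).re * (v0 j).im) = 0 := by simp [hv0im]
      have htan : v0 ∈ complexTangent (rho n θ) p0 := by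
        rw [tangent_iff hV hθ hmem0]
        rw [S1, S2, S3, S4]; norm_num
      have hv0ne : v0 ≠ 0 := by
        intro h
        have h1 := congrFun h i1
        rw [hv0] at h1
        simp at h1
      have hLv := hL p0 hp0S v0 htan hv0ne
      rw [levi_formula hV hθ hmem0] at hLv
      have T1 : (∑ j, (v0 j).im * (v0 j).im) = 0 := by simp [hv0im]
      have T2 : (∑ j, (v0 j).re * (v0 j).re) = 1 := by
        calc (∑ j, (v0 j).re * (v0 j).re)
            = ∑ j, (fun i => if i = i1 then (1:ℝ) else 0) j * (if j = i1 then (1:ℝ) else 0) :=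
              Finset.sum_congr rfl fun j _ => by rw [hv0re j]
          _ = (fun i => if i = i1 then (1:ℝ) else 0) i1 := sum_ind _ i1
          _ = 1 := by simp
      rw [T1, T2, S2, S4, hsum_re] at hLv
      have hd1 : 1 < deriv θ s := by nlinarith [hLv]
      refine ⟨hd1, ?_⟩
      rw [← hs0'] at hd1 hθs ⊢
      have : (1 - deriv θ 0) * θ 0 < 0 := mul_neg_of_neg_of_pos (by linarith) hθs
      nlinarith [this]
    · -- case s > 0
      have hsne : s ≠ 0 := ne_of_gt hspos
      obtain ⟨k, hk⟩ : ∃ k, x k ≠ 0 := by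
        by_contra hall; push_neg at hall
        have hzz : (∑ j, x j ^ 2) = 0 := Finset.sum_eq_zero fun j _ => by rw [hall j]; ring
        rw [hsx, hzz] at hspos; exact lt_irrefl 0 hspos
      set i0 : Fin n := ⟨0, by omega⟩ with hi0
      set i1 : Fin n := ⟨1, by omega⟩ with hi1
      set j0 : Fin n := if k = i0 then i1 else i0 with hj0def
      have hj0k : j0 ≠ k := by
        rw [hj0def]; split_ifs with h
        · rw [h]; simp [hi0, hi1, Fin.ext_iff]
        · exact fun hc => h hc.symm
      set a : Fin n → ℝ := fun i =>
        x k * (if i = j0 then 1 else 0) - x j0 * (if i = k then 1 else 0) with hadef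
      have dot_a : ∀ g : Fin n → ℝ, (∑ i, g i * a i) = g j0 * x k - g k * x j0 := by
        intro g
        have hterm : ∀ i, g i * a i
            = x k * (g i * (if i = j0 then 1 else 0))
              - x j0 * (g i * (if i = k then 1 else 0)) := fun i => by rw [hadef]; ring
        rw [Finset.sum_congr rfl fun i _ => hterm i, Finset.sum_sub_distrib,
          ← Finset.mul_sum, ← Finset.mul_sum, sum_ind, sum_ind]
        ring
      have hxa : (∑ i, x i * a i) = 0 := by rw [dot_a]; ring
      have haj0 : a j0 = x k := by
        simp [hadef, hj0k]
      have hak : a k = - x j0 := by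
        simp [hadef, Ne.symm hj0k]
      have hna : (∑ i, a i * a i) = x k * x k + x j0 * x j0 := by
        rw [dot_a a, haj0, hak]; ring
      have hnapos : 0 < ∑ i, a i * a i := by
        rw [hna]; nlinarith [mul_self_nonneg (x j0), mul_self_pos.mpr hk]
      have hxxs : (∑ i, x i * x i) = s := by
        rw [hsx]; exact Finset.sum_congr rfl fun i _ => (pow_two (x i)).symm
      -- Construction A : shows 1 < deriv θ s
      set μ := Real.sqrt (θ s / s) with hμdef
      have hμsq : μ * μ = θ s / s := Real.mul_self_sqrt (by positivity)
      set pA : Fin n → ℂ := fun j => ⟨x j, μ * x j⟩ with hpA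
      have hreA : ∀ j, (pA j).re = x j := fun j => rfl
      have himA : ∀ j, (pA j).im = μ * x j := fun j => rfl
      have hsum_reA : (∑ j, (pA j).re ^ 2) = s := by
        rw [hsx]
      have hmemA : (∑ j, (pA j).re ^ 2) ∈ V := by rw [hsum_reA]; exact hsV
      have hpAS : pA ∈ SigmaSet n U θ := by
        refine ⟨?_, ?_⟩
        · have hfx : (fun j => (pA j).re) = x := funext fun j => rfl
          rw [hfx]; exact hxU
        · rw [hsum_reA]
          have him2 : (∑ j, (pA j).im ^ 2) = μ * μ * s := by
            calc (∑ j, (pA j).im ^ 2) = ∑ j, (μ * μ) * (x j ^ 2) :=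
                  Finset.sum_congr rfl fun j _ => by rw [himA j]; ring
              _ = (μ * μ) * ∑ j, x j ^ 2 := by rw [Finset.mul_sum]
              _ = μ * μ * s := by rw [← hsx]
          rw [him2, hμsq]; field_simp
      set vA : Fin n → ℂ := fun i => ((a i : ℝ) : ℂ) with hvA
      have hreVA : ∀ j, (vA j).re = a j := fun j => Complex.ofReal_re _
      have himVA : ∀ j, (vA j).im = 0 := fun j => Complex.ofReal_im _
      have hSA1 : (∑ j, (pA j).im * (vA j).im) = 0 := by simp [himVA]
      have hSA2 : (∑ j, (pA j).re * (vA j).re) = 0 := by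
        calc (∑ j, (pA j).re * (vA j).re) = ∑ i, x i * a i :=
              Finset.sum_congr rfl fun j _ => by rw [hreA j, hreVA j]
          _ = 0 := hxa
      have hSA3 : (∑ j, (pA j).im * (vA j).re) = 0 := by
        calc (∑ j, (pA j).im * (vA j).re) = ∑ i, μ * (x i * a i) :=
              Finset.sum_congr rfl fun j _ => by rw [himA j, hreVA j]; ring
          _ = μ * ∑ i, x i * a i := by rw [Finset.mul_sum]
          _ = 0 := by rw [hxa, mul_zero]
      have hSA4 : (∑ j, (pA j).re * (vA j).im) = 0 := by simp [himVA]
      have htanA : vA ∈ complexTangent (rho n θ) pA := by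
        rw [tangent_iff hV hθ hmemA]
        rw [hSA1, hSA2, hSA3, hSA4]; norm_num
      have hvAne : vA ≠ 0 := by
        intro h
        have h1 : ((a j0 : ℝ) : ℂ) = 0 := by
          have h2 := congrFun h j0
          simpa [hvA] using h2
        have h3 : a j0 = 0 := by exact_mod_cast h1
        rw [haj0] at h3; exact hk h3
      have hLA := hL pA hpAS vA htanA hvAne
      rw [levi_formula hV hθ hmemA] at hLA
      have hTA1 : (∑ j, (vA j).im * (vA j).im) = 0 := by simp [himVA]
      have hTA2 : (∑ j, (vA j).re * (vA j).re) = ∑ i, a i * a i :=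
        Finset.sum_congr rfl fun j _ => by rw [hreVA j]
      rw [hTA1, hTA2, hSA2, hSA4, hsum_reA] at hLA
      have hd1 : 1 < deriv θ s := by nlinarith [hLA, hnapos]
      refine ⟨hd1, ?_⟩
      -- Construction B : the second inequality
      set c1 := Real.sqrt (θ s / (∑ i, a i * a i)) with hc1def
      have hc1sq : c1 * c1 = θ s / (∑ i, a i * a i) := Real.mul_self_sqrt (by positivity)
      set y : Fin n → ℝ := fun i => c1 * a i with hydef
      have hyy : (∑ i, y i * y i) = θ s := by
        calc (∑ i, y i * y i) = ∑ i, (c1 * c1) * (a i * a i) :=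
              Finset.sum_congr rfl fun i _ => by rw [hydef]; ring
          _ = (c1 * c1) * ∑ i, a i * a i := by rw [Finset.mul_sum]
          _ = θ s := by rw [hc1sq, div_mul_cancel₀ _ hnapos.ne']
      have hxy : (∑ i, x i * y i) = 0 := by
        calc (∑ i, x i * y i) = c1 * ∑ i, x i * a i := by
              rw [Finset.mul_sum]; exact Finset.sum_congr rfl fun i _ => by rw [hydef]; ring
          _ = 0 := by rw [hxa, mul_zero]
      set pB : Fin n → ℂ := fun j => ⟨x j, y j⟩ with hpB
      set eB := deriv θ s * s / θ s with heBdef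
      have heB : eB * θ s = deriv θ s * s := by rw [heBdef]; field_simp
      set vB : Fin n → ℂ := fun j => ⟨x j, eB * y j⟩ with hvB
      have hreB : ∀ j, (pB j).re = x j := fun j => rfl
      have himB : ∀ j, (pB j).im = y j := fun j => rfl
      have hreVB : ∀ j, (vB j).re = x j := fun j => rfl
      have himVB : ∀ j, (vB j).im = eB * y j := fun j => rfl
      have hsum_reB : (∑ j, (pB j).re ^ 2) = s := by
        rw [hsx]
      have hmemB : (∑ j, (pB j).re ^ 2) ∈ V := by rw [hsum_reB]; exact hsV
      have hpBS : pB ∈ SigmaSet n U θ := by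
        refine ⟨?_, ?_⟩
        · have hfx : (fun j => (pB j).re) = x := funext fun j => rfl
          rw [hfx]; exact hxU
        · rw [hsum_reB]
          calc (∑ j, (pB j).im ^ 2) = ∑ i, y i * y i :=
                Finset.sum_congr rfl fun j _ => by rw [himB j, pow_two]
            _ = θ s := hyy
      have hSB1 : (∑ j, (pB j).im * (vB j).im) = deriv θ s * s := by
        calc (∑ j, (pB j).im * (vB j).im) = ∑ i, eB * (y i * y i) :=
              Finset.sum_congr rfl fun j _ => by rw [himB j, himVB j]; ring
          _ = eB * ∑ i, y i * y i := by rw [Finset.mul_sum]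
          _ = eB * θ s := by rw [hyy]
          _ = deriv θ s * s := heB
      have hSB2 : (∑ j, (pB j).re * (vB j).re) = s := by
        calc (∑ j, (pB j).re * (vB j).re) = ∑ i, x i * x i :=
              Finset.sum_congr rfl fun j _ => by
                first | rfl | ring | (simp only [hreB, hreVB]; first | rfl | ring)
          _ = s := hxxs
      have hSB3 : (∑ j, (pB j).im * (vB j).re) = 0 := by
        calc (∑ j, (pB j).im * (vB j).re) = ∑ i, x i * y i :=
              Finset.sum_congr rfl fun j _ => by rw [himB j, hreVB j]; ring
          _ = 0 := hxy
      have hSB4 : (∑ j, (pB j).re * (vB j).im) = 0 := by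
        calc (∑ j, (pB j).re * (vB j).im) = ∑ i, eB * (x i * y i) :=
              Finset.sum_congr rfl fun j _ => by rw [hreB j, himVB j]; ring
          _ = eB * ∑ i, x i * y i := by rw [Finset.mul_sum]
          _ = 0 := by rw [hxy, mul_zero]
      have htanB : vB ∈ complexTangent (rho n θ) pB := by
        rw [tangent_iff hV hθ hmemB]
        rw [hSB1, hSB2, hSB3, hSB4, hsum_reB]
        constructor <;> ring
      have hvBne : vB ≠ 0 := by
        intro h
        have h1 := congrFun h k
        have h2 : (vB k).re = 0 := by rw [h1]; rfl
        rw [hreVB k] at h2; exact hk h2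
      have hLB := hL pB hpBS vB htanB hvBne
      rw [levi_formula hV hθ hmemB] at hLB
      have hTB1 : (∑ j, (vB j).im * (vB j).im) = eB * eB * θ s := by
        calc (∑ j, (vB j).im * (vB j).im) = ∑ i, (eB * eB) * (y i * y i) :=
              Finset.sum_congr rfl fun j _ => by rw [himVB j]; ring
          _ = (eB * eB) * ∑ i, y i * y i := by rw [Finset.mul_sum]
          _ = eB * eB * θ s := by rw [hyy]
      have hTB2 : (∑ j, (vB j).re * (vB j).re) = s := by
        calc (∑ j, (vB j).re * (vB j).re) = ∑ i, x i * x i :=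
              Finset.sum_congr rfl fun j _ => by
                first | rfl | ring | (simp only [hreVB]; first | rfl | ring)
          _ = s := hxxs
      try rw [hTB1] at hLB
      try rw [hTB2] at hLB
      try rw [hSB2] at hLB
      try rw [hSB4] at hLB
      try rw [hsum_reB] at hLB
      clear_value i0 i1 j0 a μ pA vA c1 y pB eB vB
      clear hL hIV hθpos dot_a hadef hxa haj0 hak hna hxy hyy hydef hc1def hc1sq
        htanB hvBne hpBS hSB1 hSB2 hSB3 hSB4 hTB1 hTB2 hreB himB hreVB himVB
        hsum_reB hmemB hpB hvB heBdef hpA hvA hreA himA hreVA himVA hsum_reA hmemA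
        hpAS htanA hvAne hTA1 hTA2 hSA1 hSA2 hSA3 hSA4 hLA hμdef hμsq hxxs hnapos
      have hnum : 2 * (eB * eB * θ s) - 2 * deriv θ s * s
          - 4 * deriv (deriv θ) s * (s * s)
          + (2 * s - 2 * deriv θ s * (eB * eB * θ s)) < 0 := by
        nlinarith [hLB]
      have h5 : (2 * (eB * eB * θ s) - 2 * deriv θ s * s
          - 4 * deriv (deriv θ) s * (s * s)
          + (2 * s - 2 * deriv θ s * (eB * eB * θ s))) * θ s < 0 :=
        mul_neg_of_neg_of_pos hnum hθs
      have he2 : (2 - 2 * deriv θ s) * (eB * eB * (θ s * θ s))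
          = (2 - 2 * deriv θ s) * ((deriv θ s * s) * (deriv θ s * s)) := by
        rw [show eB * eB * (θ s * θ s) = (eB * θ s) * (eB * θ s) by ring, heB]
      by_contra hcon
      push_neg at hcon
      nlinarith [h5, he2, mul_le_mul_of_nonneg_left hcon (by linarith : (0:ℝ) ≤ 2 * s)]
  · -- differential inequalities ⇒ Levi negativity
    intro hI p hp v hv hvne
    have hpU : (fun j => (p j).re) ∈ U := hp.1
    have hpS : (∑ j, (p j).im ^ 2) = θ (∑ j, (p j).re ^ 2) := hp.2
    have hsmem : (∑ j, (p j).re ^ 2) ∈ {s : ℝ | ∃ x ∈ U, s = ∑ j, x j ^ 2} :=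
      ⟨fun j => (p j).re, hpU, rfl⟩
    have hsV : (∑ j, (p j).re ^ 2) ∈ V := hIV hsmem
    have hθs : 0 < θ (∑ j, (p j).re ^ 2) := hθpos _ hsmem
    obtain ⟨ht', hineq⟩ := hI _ hsmem
    rw [tangent_iff hV hθ hsV] at hv
    obtain ⟨ht1, ht2⟩ := hv
    rw [levi_formula hV hθ hsV]
    apply div_neg_of_neg_of_pos _ (by norm_num)
    have hyy : (∑ j, (p j).im * (p j).im) = θ (∑ j, (p j).re ^ 2) := by
      rw [← hpS]; exact Finset.sum_congr rfl fun j _ => (pow_two _).symm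
    have hxx : (∑ j, (p j).re * (p j).re) = (∑ j, (p j).re ^ 2) :=
      Finset.sum_congr rfl fun j _ => (pow_two _).symm
    have htv : 0 < (∑ j, (p j).im * (p j).im) := by rw [hyy]; exact hθs
    have h1' : deriv θ (∑ j, (p j).re ^ 2) * (∑ j, (p j).re * (v j).re)
        = ∑ j, (p j).im * (v j).im := by linarith
    have h2' : deriv θ (∑ j, (p j).re ^ 2) * (∑ j, (p j).re * (v j).im)
        = -(∑ j, (p j).im * (v j).re) := by linarith
    have hN : 0 < (∑ j, (v j).re * (v j).re) + (∑ j, (v j).im * (v j).im) := by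
      obtain ⟨j, hj⟩ : ∃ j, v j ≠ 0 := by
        by_contra hh; push_neg at hh; exact hvne (funext hh)
      have hjpos : 0 < (v j).re * (v j).re + (v j).im * (v j).im := by
        have := Complex.normSq_pos.mpr hj
        rwa [Complex.normSq_apply] at this
      have hle := Finset.single_le_sum
        (f := fun i => (v i).re * (v i).re + (v i).im * (v i).im)
        (fun i _ => add_nonneg (mul_self_nonneg _) (mul_self_nonneg _)) (Finset.mem_univ j)
      rw [Finset.sum_add_distrib] at hle
      have hle' : (v j).re * (v j).re + (v j).im * (v j).im
          ≤ (∑ i, (v i).re * (v i).re) + (∑ i, (v i).im * (v i).im) := hle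
      linarith
    have hineq' : (1 - deriv θ (∑ j, (p j).re ^ 2))
        * ((∑ j, (p j).re * (p j).re) * (deriv θ (∑ j, (p j).re ^ 2)) ^ 2
          + (∑ j, (p j).im * (p j).im))
        < 2 * (∑ j, (p j).re * (p j).re) * (∑ j, (p j).im * (p j).im)
          * deriv (deriv θ) (∑ j, (p j).re ^ 2) := by
      rw [hxx, hyy]
      nlinarith [hineq]
    have key : 2 * (∑ j, (v j).im * (v j).im)
        - 2 * deriv θ (∑ j, (p j).re ^ 2) * (∑ j, (v j).re * (v j).re)
        - 4 * deriv (deriv θ) (∑ j, (p j).re ^ 2)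
          * ((∑ j, (p j).re * (v j).re) * (∑ j, (p j).re * (v j).re))
        + (2 * (∑ j, (v j).re * (v j).re)
        - 2 * deriv θ (∑ j, (p j).re ^ 2) * (∑ j, (v j).im * (v j).im)
        - 4 * deriv (deriv θ) (∑ j, (p j).re ^ 2)
          * ((∑ j, (p j).re * (v j).im) * (∑ j, (p j).re * (v j).im))) < 0 :=
      levi_neg (fun j => (p j).re) (fun j => (p j).im) (fun j => (v j).re)
        (fun j => (v j).im) (deriv θ (∑ j, (p j).re ^ 2))
        (deriv (deriv θ) (∑ j, (p j).re ^ 2)) htv h1' h2' hN ht' hineq'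
    linarith [key]
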